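/- Let T be a bounded linear operator on H admitting an A-adjoint T♯, and set α = | ‖Re_A(T) + Im_A(T)‖_A − ‖Re_A(T) − Im_A(T)‖_A |. Then (1/4)·‖T♯T + TT♯‖_A + (α/2)·max{‖Re_A(T)‖_A, ‖Im_A(T)‖_A} ≤ (w_A(T))² ≤ (1/2)·‖TT♯ + T♯T‖_A. -/

import Mathlib

set_option maxHeartbeats 1000000
set_option synthInstance.maxHeartbeats 400000
set_option linter.unusedSectionVars false
set_option linter.unusedVariables false



noncomputable section

open scoped ComplexInnerProductSpace

variable {H : Type*} [NormedAddCommGroup H] [InnerProductSpace ℂ H] [CompleteSpace H]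

/-- The semi-inner product induced by a positive operator `A`:
`⟨x,y⟩_A = ⟨Ax,y⟩` (linear in the first argument, following the paper's convention). -/
def innerA (A : H →L[ℂ] H) (x y : H) : ℂ := ⟪y, A x⟫

/-- The seminorm induced by `A`: `‖x‖_A = ⟨Ax,x⟩^{1/2}`. -/
def normA (A : H →L[ℂ] H) (x : H) : ℝ := Real.sqrt (innerA A x x).re

/-- The `A`-numerical radius `w_A(T) = sup { |⟨Tx,x⟩_A| : ‖x‖_A = 1 }`. -/
def wA (A T : H →L[ℂ] H) : ℝ :=
  sSup {r : ℝ | ∃ x : H, normA A x = 1 ∧ r = ‖innerA A (T x) x‖}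

/-- The `A`-Crawford number `c_A(T) = inf { |⟨Tx,x⟩_A| : ‖x‖_A = 1 }`. -/
def cA (A T : H →L[ℂ] H) : ℝ :=
  sInf {r : ℝ | ∃ x : H, normA A x = 1 ∧ r = ‖innerA A (T x) x‖}

/-- The `A`-operator seminorm `‖T‖_A = sup { ‖Tx‖_A : ‖x‖_A = 1 }`. -/
def opNormA (A T : H →L[ℂ] H) : ℝ :=
  sSup {r : ℝ | ∃ x : H, normA A x = 1 ∧ r = normA A (T x)}

/-- The `A`-Euclidean operator radius of the pair `(B, C)`. -/
def wAe (A B C : H →L[ℂ] H) : ℝ :=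
  sSup {r : ℝ | ∃ x : H, normA A x = 1 ∧
    r = Real.sqrt ((‖innerA A (B x) x‖)^2 + (‖innerA A (C x) x‖)^2)}

/-- The `A`-Euclidean operator seminorm of the pair `(B, C)`. -/
def normAe (A B C : H →L[ℂ] H) : ℝ :=
  sSup {r : ℝ | ∃ x : H, normA A x = 1 ∧
    r = Real.sqrt ((normA A (B x))^2 + (normA A (C x))^2)}

/-- `Re_A(T) = (T + T♯)/2`, where `Ts` is an `A`-adjoint of `T`. -/
def ReA (T Ts : H →L[ℂ] H) : H →L[ℂ] H := (2 : ℂ)⁻¹ • (T + Ts)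

/-- `Im_A(T) = (T - T♯)/(2i)`, where `Ts` is an `A`-adjoint of `T`. -/
def ImA (T Ts : H →L[ℂ] H) : H →L[ℂ] H := (2 * Complex.I)⁻¹ • (T - Ts)

lemma aux_inner (A R : H →L[ℂ] H) (hR : IsSelfAdjoint R) (hRR : R * R = A) (x y : H) :
    innerA A x y = ⟪R y, R x⟫ := by
  have hA : A x = R (R x) := by rw [← hRR]; rfl
  rw [innerA, hA, ← ContinuousLinearMap.adjoint_inner_left, hR.adjoint_eq]

lemma aux_norm (A R : H →L[ℂ] H) (hR : IsSelfAdjoint R) (hRR : R * R = A) (x : H) :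
    normA A x = ‖R x‖ := by
  rw [normA, aux_inner A R hR hRR]
  rw [show (⟪R x, R x⟫ : ℂ).re = ‖R x‖^2 from inner_self_eq_norm_sq (𝕜 := ℂ) (R x)]
  exact Real.sqrt_sq (norm_nonneg _)

lemma aux_cs (A R : H →L[ℂ] H) (hR : IsSelfAdjoint R) (hRR : R * R = A) (x y : H) :
    ‖innerA A x y‖ ≤ normA A x * normA A y := by
  rw [aux_inner A R hR hRR, aux_norm A R hR hRR, aux_norm A R hR hRR]
  rw [mul_comm]
  exact norm_inner_le_norm (𝕜 := ℂ) (R y) (R x)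

lemma aux_add1 (A : H →L[ℂ] H) (u v y : H) :
    innerA A (u + v) y = innerA A u y + innerA A v y := by
  simp [innerA, inner_add_right]

lemma aux_smul1 (A : H →L[ℂ] H) (c : ℂ) (u y : H) :
    innerA A (c • u) y = c * innerA A u y := by
  simp [innerA, inner_smul_right]

lemma aux_smul2 (A : H →L[ℂ] H) (c : ℂ) (u y : H) :
    innerA A u (c • y) = (starRingEnd ℂ) c * innerA A u y := by
  simp [innerA, inner_smul_left, mul_comm]

lemma aux_norm_smul (A R : H →L[ℂ] H) (hR : IsSelfAdjoint R) (hRR : R * R = A) (c : ℂ) (x : H) :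
    normA A (c • x) = ‖c‖ * normA A x := by
  rw [aux_norm A R hR hRR, aux_norm A R hR hRR, map_smul, norm_smul]

/-- shift through an A-adjoint: `⟨Sx, Sy⟩_A = ⟨S'Sx, y⟩_A` when `A S' = S* A`. -/
lemma aux_shift (A S S' : H →L[ℂ] H) (hS : A * S' = star S * A) (x y : H) :
    innerA A (S x) (S y) = innerA A ((S' * S) x) y := by
  have h1 : A ((S' * S) x) = (star S) (A (S x)) := by
    have : A (S' (S x)) = (A * S') (S x) := rfl
    rw [ContinuousLinearMap.mul_apply, this, hS]; rfl
  rw [innerA, innerA, h1, ContinuousLinearMap.star_eq_adjoint,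
    ContinuousLinearMap.adjoint_inner_right]

/-- symmetry for A-selfadjoint operators. -/
lemma aux_sym (A R S : H →L[ℂ] H) (hR : IsSelfAdjoint R) (hRR : R * R = A)
    (hS : A * S = star S * A) (u v : H) :
    innerA A (S u) v = (starRingEnd ℂ) (innerA A (S v) u) := by
  have hA : IsSelfAdjoint A := by
    rw [← hRR]; unfold IsSelfAdjoint; rw [star_mul, hR.star_eq]
  have h1 : innerA A (S u) v = ⟪S v, A u⟫ := by
    rw [innerA]
    have : A (S u) = (star S) (A u) := by
      have h : A (S u) = (A * S) u := rfl
      rw [h, hS]; rfl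
    rw [this, ContinuousLinearMap.star_eq_adjoint, ContinuousLinearMap.adjoint_inner_right]
  have h2 : (starRingEnd ℂ) (innerA A (S v) u) = ⟪S v, A u⟫ := by
    rw [innerA, inner_conj_symm]
    conv_lhs => rw [← hA.adjoint_eq]
    rw [ContinuousLinearMap.adjoint_inner_left]
  rw [h1, h2]

lemma aux_wbound (A R : H →L[ℂ] H) (hR : IsSelfAdjoint R) (hRR : R * R = A)
    (S : H →L[ℂ] H) (hS : A * S = star S * A)
    (x : H) (hx : normA A x = 1) :
    ‖innerA A (S x) x‖ ≤ ‖S‖ := by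
  have hpow : ∀ k : ℕ, A * S ^ k = star (S ^ k) * A := by
    intro k; induction k with
    | zero => simp
    | succ n ih =>
        rw [pow_succ, ← mul_assoc, ih, mul_assoc, hS, ← mul_assoc, star_mul, star_pow,
          ← pow_succ, ← pow_succ']
  set g : ℕ → ℝ := fun n => ‖innerA A ((S ^ 2 ^ n) x) x‖ with hg
  have hgnn : ∀ n, 0 ≤ g n := fun n => norm_nonneg _
  have hsq : ∀ n, g n ^ 2 ≤ g (n + 1) := by
    intro n
    have h1 : g n ≤ normA A ((S ^ 2 ^ n) x) := by
      have := aux_cs A R hR hRR ((S ^ 2 ^ n) x) x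
      rw [hx, mul_one] at this
      exact this
    have h2 : normA A ((S ^ 2 ^ n) x) ^ 2 ≤ g (n + 1) := by
      have hid : innerA A ((S ^ 2 ^ n) x) ((S ^ 2 ^ n) x)
          = innerA A ((S ^ 2 ^ (n + 1)) x) x := by
        have h := aux_shift A (S ^ 2 ^ n) (S ^ 2 ^ n) (hpow (2 ^ n)) x x
        rw [h, ← pow_add, ← two_mul, ← pow_succ']
      have hre : normA A ((S ^ 2 ^ n) x) ^ 2 = (innerA A ((S ^ 2 ^ (n+1)) x) x).re := by
        rw [aux_norm A R hR hRR, ← hid, aux_inner A R hR hRR]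
        exact (inner_self_eq_norm_sq (𝕜 := ℂ) (R ((S ^ 2 ^ n) x))).symm
      rw [hre]
      exact (Complex.re_le_norm _)
    calc g n ^ 2 ≤ normA A ((S ^ 2 ^ n) x) ^ 2 := by
          apply pow_le_pow_left₀ (hgnn n) h1
      _ ≤ g (n + 1) := h2
  have hiter : ∀ n, g 0 ^ 2 ^ n ≤ g n := by
    intro n; induction n with
    | zero => simp
    | succ n ih =>
        calc g 0 ^ 2 ^ (n + 1) = (g 0 ^ 2 ^ n) ^ 2 := by rw [← pow_mul, pow_succ]
          _ ≤ g n ^ 2 := pow_le_pow_left₀ (pow_nonneg (hgnn 0) _) ih 2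
          _ ≤ g (n + 1) := hsq n
  set C : ℝ := ‖A‖ * ‖x‖ ^ 2 with hC
  have hcrude : ∀ n, g n ≤ C * ‖S‖ ^ 2 ^ n := by
    intro n
    have h1 : g n ≤ ‖x‖ * ‖A ((S ^ 2 ^ n) x)‖ := by
      have he : g n = ‖(⟪x, A ((S ^ 2 ^ n) x)⟫ : ℂ)‖ := by
        simp [hg, innerA]
      rw [he]
      exact norm_inner_le_norm _ _
    have h2 : ‖A ((S ^ 2 ^ n) x)‖ ≤ ‖A‖ * (‖S‖ ^ 2 ^ n * ‖x‖) := by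
      calc ‖A ((S ^ 2 ^ n) x)‖ ≤ ‖A‖ * ‖(S ^ 2 ^ n) x‖ := A.le_opNorm _
        _ ≤ ‖A‖ * (‖S ^ 2 ^ n‖ * ‖x‖) :=
            mul_le_mul_of_nonneg_left ((S ^ 2 ^ n).le_opNorm x) (norm_nonneg A)
        _ ≤ ‖A‖ * (‖S‖ ^ 2 ^ n * ‖x‖) := by
            apply mul_le_mul_of_nonneg_left _ (norm_nonneg A)
            exact mul_le_mul_of_nonneg_right
              (norm_pow_le' S (by positivity)) (norm_nonneg x)
    calc g n ≤ ‖x‖ * (‖A‖ * (‖S‖ ^ 2 ^ n * ‖x‖)) :=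
          le_trans h1 (mul_le_mul_of_nonneg_left h2 (norm_nonneg x))
      _ = C * ‖S‖ ^ 2 ^ n := by rw [hC]; ring
  have hC1 : 1 ≤ C := by
    have hre1 : (innerA A x x).re = 1 := by
      have h := hx
      rw [normA, show (1:ℝ) = Real.sqrt 1 from (Real.sqrt_one).symm] at h
      have hnn : 0 ≤ (innerA A x x).re := by
        rw [aux_inner A R hR hRR,
          show (⟪R x, R x⟫ : ℂ).re = ‖R x‖ ^ 2 from inner_self_eq_norm_sq (𝕜 := ℂ) (R x)]
        positivity
      nlinarith [Real.sq_sqrt hnn, Real.sqrt_one, h]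
    calc (1:ℝ) = (innerA A x x).re := hre1.symm
      _ ≤ ‖innerA A x x‖ := Complex.re_le_norm _
      _ = ‖(⟪x, A x⟫ : ℂ)‖ := by rw [innerA]
      _ ≤ ‖x‖ * ‖A x‖ := norm_inner_le_norm _ _
      _ ≤ ‖x‖ * (‖A‖ * ‖x‖) := mul_le_mul_of_nonneg_left (A.le_opNorm x) (norm_nonneg x)
      _ = C := by rw [hC]; ring
  have hker : ∀ n : ℕ, g 0 ≤ C ^ (((2 ^ n : ℕ) : ℝ))⁻¹ * ‖S‖ := by
    intro n
    have hk : (2 ^ n : ℕ) ≠ 0 := by positivity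
    have h1 : g 0 ^ (2 ^ n : ℕ) ≤ C * ‖S‖ ^ (2 ^ n : ℕ) := le_trans (hiter n) (hcrude n)
    have h2 : g 0 = (g 0 ^ (2 ^ n : ℕ)) ^ (((2 ^ n : ℕ) : ℝ))⁻¹ :=
      (Real.pow_rpow_inv_natCast (hgnn 0) hk).symm
    rw [h2]
    calc (g 0 ^ (2 ^ n : ℕ)) ^ (((2 ^ n : ℕ) : ℝ))⁻¹
        ≤ (C * ‖S‖ ^ (2 ^ n : ℕ)) ^ (((2 ^ n : ℕ) : ℝ))⁻¹ :=
          Real.rpow_le_rpow (pow_nonneg (hgnn 0) _) h1 (by positivity)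
      _ = C ^ (((2 ^ n : ℕ) : ℝ))⁻¹ * ‖S‖ := by
          rw [Real.mul_rpow (by linarith) (by positivity),
            Real.pow_rpow_inv_natCast (norm_nonneg S) hk]
  have htend : Filter.Tendsto (fun n : ℕ => C ^ (((2 ^ n : ℕ) : ℝ))⁻¹ * ‖S‖)
      Filter.atTop (nhds ‖S‖) := by
    have h0 : Filter.Tendsto (fun n : ℕ => (((2 ^ n : ℕ) : ℝ))⁻¹) Filter.atTop (nhds 0) := by
      apply Filter.Tendsto.comp tendsto_inv_atTop_zero
      have h2 : Filter.Tendsto (fun n : ℕ => (2 : ℝ) ^ n) Filter.atTop Filter.atTop :=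
        tendsto_pow_atTop_atTop_of_one_lt one_lt_two
      simpa [Nat.cast_pow] using h2
    have hc : ContinuousAt (fun y : ℝ => C ^ y) 0 :=
      Real.continuousAt_const_rpow (by linarith : C ≠ 0)
    have h3 := (hc.tendsto.comp h0).mul_const ‖S‖
    simpa [Real.rpow_zero] using h3
  have hfin : g 0 ≤ ‖S‖ := ge_of_tendsto' htend hker
  simpa [hg] using hfin

lemma aux_opbound (A R : H →L[ℂ] H) (hR : IsSelfAdjoint R) (hRR : R * R = A)
    (S S' : H →L[ℂ] H) (hS : A * S' = star S * A)
    (x : H) (hx : normA A x = 1) :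
    normA A (S x) ≤ Real.sqrt ‖S' * S‖ := by
  have hA : star A = A := by
    rw [← hRR, star_mul, hR.star_eq]
  have hS2 : A * S = star S' * A := by
    have h := congrArg star hS
    rw [star_mul, star_mul, star_star, hA] at h
    exact h.symm
  have hsa : A * (S' * S) = star (S' * S) * A := by
    rw [star_mul, ← mul_assoc, hS, mul_assoc, hS2, ← mul_assoc]
  have h2 := aux_wbound A R hR hRR (S' * S) hsa x hx
  have hsqid : normA A (S x) ^ 2 = (innerA A ((S' * S) x) x).re := by
    rw [aux_norm A R hR hRR, ← aux_shift A S S' hS x x, aux_inner A R hR hRR]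
    exact (inner_self_eq_norm_sq (𝕜 := ℂ) (R (S x))).symm
  rw [show Real.sqrt ‖S' * S‖ = Real.sqrt ‖S' * S‖ from rfl]
  have hnn : 0 ≤ normA A (S x) := by
    rw [aux_norm A R hR hRR]; positivity
  rw [show normA A (S x) = Real.sqrt (normA A (S x) ^ 2) from (Real.sqrt_sq hnn).symm]
  apply Real.sqrt_le_sqrt
  calc normA A (S x) ^ 2 = (innerA A ((S' * S) x) x).re := hsqid
    _ ≤ ‖innerA A ((S' * S) x) x‖ := Complex.re_le_norm _
    _ ≤ ‖S' * S‖ := h2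

lemma aux_normA_nonneg (A : H →L[ℂ] H) (x : H) : 0 ≤ normA A x := Real.sqrt_nonneg _

lemma aux_opNormA_nonneg (A S : H →L[ℂ] H) : 0 ≤ opNormA A S :=
  Real.sSup_nonneg (by rintro r ⟨x, hx, rfl⟩; exact aux_normA_nonneg A _)

lemma aux_wA_nonneg (A T : H →L[ℂ] H) : 0 ≤ wA A T :=
  Real.sSup_nonneg (by rintro r ⟨x, hx, rfl⟩; exact norm_nonneg _)

lemma aux_opNormA_le (A S : H →L[ℂ] H) (c : ℝ) (hc : 0 ≤ c)
    (h : ∀ x, normA A x = 1 → normA A (S x) ≤ c) : opNormA A S ≤ c :=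
  Real.sSup_le (by rintro r ⟨x, hx, rfl⟩; exact h x hx) hc

lemma aux_wA_le (A T : H →L[ℂ] H) (c : ℝ) (hc : 0 ≤ c)
    (h : ∀ x, normA A x = 1 → ‖innerA A (T x) x‖ ≤ c) : wA A T ≤ c :=
  Real.sSup_le (by rintro r ⟨x, hx, rfl⟩; exact h x hx) hc

lemma aux_le_opNormA (A R : H →L[ℂ] H) (hR : IsSelfAdjoint R) (hRR : R * R = A)
    (S S' : H →L[ℂ] H) (hS : A * S' = star S * A)
    (x : H) (hx : normA A x = 1) : normA A (S x) ≤ opNormA A S :=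
  le_csSup ⟨Real.sqrt ‖S' * S‖, by
    rintro r ⟨y, hy, rfl⟩; exact aux_opbound A R hR hRR S S' hS y hy⟩ ⟨x, hx, rfl⟩

lemma aux_le_wA (A R : H →L[ℂ] H) (hR : IsSelfAdjoint R) (hRR : R * R = A)
    (T Ts : H →L[ℂ] H) (hT : A * Ts = star T * A)
    (x : H) (hx : normA A x = 1) : ‖innerA A (T x) x‖ ≤ wA A T :=
  le_csSup ⟨Real.sqrt ‖Ts * T‖, by
    rintro r ⟨y, hy, rfl⟩
    calc ‖innerA A (T y) y‖ ≤ normA A (T y) * normA A y := aux_cs A R hR hRR _ _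
      _ = normA A (T y) := by rw [hy, mul_one]
      _ ≤ Real.sqrt ‖Ts * T‖ := aux_opbound A R hR hRR T Ts hT y hy⟩ ⟨x, hx, rfl⟩

lemma aux_seminorm (A R : H →L[ℂ] H) (hR : IsSelfAdjoint R) (hRR : R * R = A)
    (S S' : H →L[ℂ] H) (hS : A * S' = star S * A) (v : H) :
    normA A (S v) ≤ opNormA A S * normA A v := by
  by_cases h0 : normA A v = 0
  · have h1 : normA A (S v) = 0 := by
      have hsq : normA A (S v) ^ 2 = (innerA A ((S' * S) v) v).re := by
        rw [aux_norm A R hR hRR, ← aux_shift A S S' hS v v, aux_inner A R hR hRR]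
        exact (inner_self_eq_norm_sq (𝕜 := ℂ) (R (S v))).symm
      have h2 : normA A (S v) ^ 2 ≤ 0 := by
        rw [hsq]
        calc (innerA A ((S' * S) v) v).re ≤ ‖innerA A ((S' * S) v) v‖ :=
              Complex.re_le_norm _
          _ ≤ normA A ((S' * S) v) * normA A v := aux_cs A R hR hRR _ _
          _ = 0 := by rw [h0, mul_zero]
      nlinarith [aux_normA_nonneg A (S v)]
    rw [h1, h0, mul_zero]
  · have hpos : 0 < normA A v := lt_of_le_of_ne (aux_normA_nonneg A v) (Ne.symm h0)
    set c : ℝ := normA A v with hc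
    have hu : normA A (((c⁻¹ : ℝ) : ℂ) • v) = 1 := by
      rw [aux_norm_smul A R hR hRR]
      simp only [Complex.norm_real, Real.norm_eq_abs, abs_of_pos (inv_pos.2 hpos)]
      rw [← hc]
      field_simp
    have h2 := aux_le_opNormA A R hR hRR S S' hS _ hu
    have h3 : normA A (S (((c⁻¹ : ℝ) : ℂ) • v)) = c⁻¹ * normA A (S v) := by
      rw [map_smul, aux_norm_smul A R hR hRR]
      simp only [Complex.norm_real, Real.norm_eq_abs, abs_of_pos (inv_pos.2 hpos)]
    rw [h3] at h2
    calc normA A (S v) = c * (c⁻¹ * normA A (S v)) := by field_simp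
      _ ≤ c * opNormA A S := mul_le_mul_of_nonneg_left h2 (le_of_lt hpos)
      _ = opNormA A S * c := mul_comm _ _

lemma aux_norm_le_w (A R : H →L[ℂ] H) (hR : IsSelfAdjoint R) (hRR : R * R = A)
    (S : H →L[ℂ] H) (hS : A * S = star S * A) (w : ℝ) (hw : 0 ≤ w)
    (hb : ∀ u, normA A u = 1 → ‖innerA A (S u) u‖ ≤ w)
    (x : H) (hx : normA A x = 1) : normA A (S x) ≤ w := by
  -- per-vector bound
  have hball : ∀ u : H, ‖innerA A (S u) u‖ ≤ w * normA A u ^ 2 := by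
    intro u
    by_cases h0 : normA A u = 0
    · calc ‖innerA A (S u) u‖ ≤ normA A (S u) * normA A u := aux_cs A R hR hRR _ _
        _ = 0 := by rw [h0, mul_zero]
        _ ≤ w * normA A u ^ 2 := by positivity
    · have hpos : 0 < normA A u := lt_of_le_of_ne (aux_normA_nonneg A u) (Ne.symm h0)
      set c : ℝ := normA A u with hc
      have hu : normA A (((c⁻¹ : ℝ) : ℂ) • u) = 1 := by
        rw [aux_norm_smul A R hR hRR]
        simp only [Complex.norm_real, Real.norm_eq_abs, abs_of_pos (inv_pos.2 hpos)]
        rw [← hc]; field_simp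
      have h1 := hb _ hu
      have h2 : innerA A (S (((c⁻¹ : ℝ) : ℂ) • u)) (((c⁻¹ : ℝ) : ℂ) • u)
          = ((c⁻¹ : ℝ) : ℂ) * ((starRingEnd ℂ) ((c⁻¹ : ℝ) : ℂ) * innerA A (S u) u) := by
        rw [map_smul, aux_smul1, aux_smul2]
      rw [h2] at h1
      have h3 : ‖((c⁻¹ : ℝ) : ℂ) * ((starRingEnd ℂ) ((c⁻¹ : ℝ) : ℂ)
          * innerA A (S u) u)‖ = c⁻¹ * (c⁻¹ * ‖innerA A (S u) u‖) := by
        rw [norm_mul, norm_mul]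
        simp only [Complex.norm_real, Real.norm_eq_abs, Complex.norm_conj]
        rw [abs_of_pos (inv_pos.2 hpos)]
      rw [h3] at h1
      have h4 := mul_le_mul_of_nonneg_left h1 (le_of_lt (mul_pos hpos hpos))
      calc ‖innerA A (S u) u‖
          = c * c * (c⁻¹ * (c⁻¹ * ‖innerA A (S u) u‖)) := by field_simp
        _ ≤ c * c * w := h4
        _ = w * c ^ 2 := by ring

  by_cases ht0 : normA A (S x) = 0
  · rw [ht0]; exact hw
  · have htpos : 0 < normA A (S x) :=
      lt_of_le_of_ne (aux_normA_nonneg A _) (Ne.symm ht0)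
    set t : ℝ := normA A (S x) with hts
    set y : H := ((t⁻¹ : ℝ) : ℂ) • (S x) with hy
    have hy1 : normA A y = 1 := by
      rw [hy, aux_norm_smul A R hR hRR]
      simp only [Complex.norm_real, Real.norm_eq_abs, abs_of_pos (inv_pos.2 htpos)]
      rw [← hts]; field_simp
    -- key: ⟨Sx, y⟩_A = t
    have hkey : innerA A (S x) y = (t : ℂ) := by
      rw [hy, aux_smul2, Complex.conj_ofReal]
      have hself : innerA A (S x) (S x) = ((t : ℝ) : ℂ) ^ 2 := by
        rw [aux_inner A R hR hRR, inner_self_eq_norm_sq_to_K, ← aux_norm A R hR hRR, ← hts]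
        norm_cast
      rw [hself]
      have htne : (t : ℝ) ≠ 0 := ne_of_gt htpos
      push_cast
      field_simp
    have hsymm : innerA A (S y) x = (starRingEnd ℂ) (innerA A (S x) y) :=
      aux_sym A R S hR hRR hS y x
    have hexp : innerA A (S (x + y)) (x + y) - innerA A (S (x - y)) (x - y)
        = 2 * (innerA A (S x) y + innerA A (S y) x) := by
      simp only [aux_inner A R hR hRR, map_add, map_sub, inner_add_left, inner_add_right,
        inner_sub_left, inner_sub_right]
      ring
    have hre : (innerA A (S (x + y)) (x + y)).re - (innerA A (S (x - y)) (x - y)).re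
        = 4 * t := by
      have h := congrArg Complex.re hexp
      rw [hsymm, hkey] at h
      simp only [Complex.sub_re] at h
      rw [h]
      simp [Complex.conj_ofReal]
      ring
    have hpar : normA A (x + y) ^ 2 + normA A (x - y) ^ 2 = 4 := by
      rw [aux_norm A R hR hRR, aux_norm A R hR hRR, map_add, map_sub]
      have hplaw := parallelogram_law_with_norm ℂ (R x) (R y)
      have hx' : ‖R x‖ = 1 := by rw [← aux_norm A R hR hRR, hx]
      have hy' : ‖R y‖ = 1 := by rw [← aux_norm A R hR hRR, hy1]
      nlinarith [hplaw]
    have hb1 : (innerA A (S (x + y)) (x + y)).re ≤ w * normA A (x + y) ^ 2 :=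
      le_trans (Complex.re_le_norm _) (hball (x + y))
    have hb2 : -((innerA A (S (x - y)) (x - y)).re) ≤ w * normA A (x - y) ^ 2 := by
      have h5 := hball (x - y)
      have h6 := Complex.abs_re_le_norm (innerA A (S (x - y)) (x - y))
      have h7 := neg_abs_le ((innerA A (S (x - y)) (x - y)).re)
      linarith
    have hsum : w * normA A (x + y) ^ 2 + w * normA A (x - y) ^ 2 = 4 * w := by
      rw [← mul_add, hpar]; ring
    linarith

lemma aux_sub1 (A : H →L[ℂ] H) (u v y : H) :
    innerA A (u - v) y = innerA A u y - innerA A v y := by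
  simp [innerA, inner_sub_right]

theorem stmt3 (A : H →L[ℂ] H) (hA : A.IsPositive) (hA0 : A ≠ 0)
    (T Ts : H →L[ℂ] H)
    (hT : A.comp Ts = (ContinuousLinearMap.adjoint T).comp A)
    (α : ℝ)
    (hα : α = |opNormA A (ReA T Ts + ImA T Ts) - opNormA A (ReA T Ts - ImA T Ts)|) :
    (1/4) * opNormA A (Ts * T + T * Ts)
        + (α/2) * max (opNormA A (ReA T Ts)) (opNormA A (ImA T Ts)) ≤ (wA A T)^2
      ∧ (wA A T)^2 ≤ (1/2) * opNormA A (T * Ts + Ts * T) := by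
  -- square root of A
  have h0 : (0 : H →L[ℂ] H) ≤ A := (ContinuousLinearMap.nonneg_iff_isPositive A).2 hA
  set R : H →L[ℂ] H := CFC.sqrt A with hRdef
  have hRR : R * R = A := CFC.sqrt_mul_sqrt_self A h0
  have hR : IsSelfAdjoint R := IsSelfAdjoint.of_nonneg (CFC.sqrt_nonneg A)
  -- star form of the adjoint hypotheses
  have hTs : A * Ts = star T * A := by
    rw [ContinuousLinearMap.star_eq_adjoint]; exact hT
  have hAsa : star A = A := by rw [← hRR, star_mul, hR.star_eq]
  have hT2 : A * T = star Ts * A := by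
    have h := congrArg star hTs
    rw [star_mul, star_mul, star_star, hAsa] at h
    exact h.symm
  set P : H →L[ℂ] H := ReA T Ts with hPdef
  set Q : H →L[ℂ] H := ImA T Ts with hQdef
  -- scalar facts
  have hstar2 : star ((2:ℂ)⁻¹) = (2:ℂ)⁻¹ := by
    norm_num [Complex.star_def]
  have hconj2I : star (((2:ℂ) * Complex.I)⁻¹) = -(((2:ℂ) * Complex.I)⁻¹) := by
    rw [Complex.star_def, map_inv₀, map_mul, Complex.conj_I, Complex.conj_ofNat]
    rw [mul_neg, inv_neg]
  -- A-selfadjointness of P and Q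
  have hP : A * P = star P * A := by
    rw [hPdef, ReA]
    simp only [star_smul, star_add, mul_smul_comm, smul_mul_assoc, mul_add, add_mul, hstar2]
    rw [hTs, hT2, add_comm (star Ts * A)]
  have hQ : A * Q = star Q * A := by
    rw [hQdef, ImA]
    simp only [star_smul, star_sub, hconj2I, mul_smul_comm, smul_mul_assoc, mul_sub, sub_mul]
    rw [hTs, hT2, neg_smul, ← smul_neg, neg_sub]
  -- selfadjointness of sums
  have hG1 : A * (P + Q) = star (P + Q) * A := by
    rw [mul_add, star_add, add_mul, hP, hQ]
  have hG2 : A * (P - Q) = star (P - Q) * A := by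
    rw [mul_sub, star_sub, sub_mul, hP, hQ]
  have hTTs : A * (T * Ts) = star (T * Ts) * A := by
    rw [← mul_assoc, hT2, mul_assoc, hTs, star_mul, ← mul_assoc]
  have hTsT : A * (Ts * T) = star (Ts * T) * A := by
    rw [← mul_assoc, hTs, mul_assoc, hT2, star_mul, ← mul_assoc]
  have hS0 : A * (T * Ts + Ts * T) = star (T * Ts + Ts * T) * A := by
    rw [mul_add, hTTs, hTsT, star_add, add_mul]
  have hS0' : A * (Ts * T + T * Ts) = star (Ts * T + T * Ts) * A := by
    rw [mul_add, hTTs, hTsT, star_add, add_mul]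
  -- operator identities
  have hU : (T + Ts) * (T + Ts) = T * T + T * Ts + Ts * T + Ts * Ts := by noncomm_ring
  have hV : (T - Ts) * (T - Ts) = T * T - T * Ts - Ts * T + Ts * Ts := by noncomm_ring
  have hPP : P * P = (4:ℂ)⁻¹ • ((T + Ts) * (T + Ts)) := by
    rw [hPdef, ReA, smul_mul_assoc, mul_smul_comm, smul_smul]
    norm_num
  have hQQ : Q * Q = -((4:ℂ)⁻¹) • ((T - Ts) * (T - Ts)) := by
    rw [hQdef, ImA, smul_mul_assoc, mul_smul_comm, smul_smul]
    congr 1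
    rw [← mul_inv]
    have h4 : ((2:ℂ) * Complex.I) * ((2:ℂ) * Complex.I) = -4 := by
      have := Complex.I_mul_I
      calc ((2:ℂ) * Complex.I) * ((2:ℂ) * Complex.I) = 4 * (Complex.I * Complex.I) := by ring
        _ = -4 := by rw [Complex.I_mul_I]; ring
    rw [h4]
    simp [inv_neg]
  have hIdent : Ts * T + T * Ts = (P + Q) * (P + Q) + (P - Q) * (P - Q) := by
    have hexp : (P + Q) * (P + Q) + (P - Q) * (P - Q)
        = (P * P + P * P) + (Q * Q + Q * Q) := by noncomm_ring
    rw [hexp, hPP, hQQ, hU, hV]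
    module
  have hPQ2 : P * P + Q * Q = (2:ℂ)⁻¹ • (T * Ts + Ts * T) := by
    rw [hPP, hQQ, hU, hV]
    module
  have hPdec : P = (2:ℂ)⁻¹ • ((P + Q) + (P - Q)) := by module
  have hQdec : Q = (2:ℂ)⁻¹ • ((P + Q) - (P - Q)) := by module
  -- pointwise real/imaginary parts
  have hconjz : ∀ x : H, innerA A (Ts x) x = (starRingEnd ℂ) (innerA A (T x) x) := by
    intro x
    have h1 : innerA A (Ts x) x = ⟪T x, A x⟫ := by
      rw [innerA]
      have hATs : A (Ts x) = (star T) (A x) := by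
        have h : A (Ts x) = (A * Ts) x := rfl
        rw [h, hTs]; rfl
      rw [hATs, ContinuousLinearMap.star_eq_adjoint, ContinuousLinearMap.adjoint_inner_right]
    have h2 : (starRingEnd ℂ) (innerA A (T x) x) = ⟪T x, A x⟫ := by
      rw [innerA, inner_conj_symm]
      conv_lhs => rw [show A = ContinuousLinearMap.adjoint A from
        (ContinuousLinearMap.star_eq_adjoint A ▸ hAsa).symm]
      rw [ContinuousLinearMap.adjoint_inner_left]
    rw [h1, h2]
  have hPz : ∀ x : H, innerA A (P x) x = ((innerA A (T x) x).re : ℂ) := by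
    intro x
    have happ : P x = (2:ℂ)⁻¹ • (T x + Ts x) := by
      rw [hPdef, ReA]; rfl
    rw [happ, aux_smul1, aux_add1, hconjz, Complex.add_conj]
    push_cast
    ring
  have hQz : ∀ x : H, innerA A (Q x) x = ((innerA A (T x) x).im : ℂ) := by
    intro x
    have happ : Q x = ((2:ℂ) * Complex.I)⁻¹ • (T x - Ts x) := by
      rw [hQdef, ImA]; rfl
    rw [happ, aux_smul1, aux_sub1, hconjz, Complex.sub_conj]
    have hi2 : ((2:ℂ) * Complex.I)⁻¹ = -((2:ℂ))⁻¹ * Complex.I := by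
      rw [mul_inv, Complex.inv_I]; ring
    rw [hi2]
    calc (-((2:ℂ))⁻¹ * Complex.I) * (((2 * (innerA A (T x) x).im : ℝ) : ℂ) * Complex.I)
        = -(((innerA A (T x) x).im : ℂ)) * (Complex.I * Complex.I) := by push_cast; ring
      _ = ((innerA A (T x) x).im : ℂ) := by rw [Complex.I_mul_I]; ring
  -- squared norm identities
  have hsqid : ∀ (S : H →L[ℂ] H), A * S = star S * A → ∀ x : H,
      normA A (S x) ^ 2 = (innerA A ((S * S) x) x).re := by
    intro S hS x
    rw [aux_norm A R hR hRR, ← aux_shift A S S hS x x, aux_inner A R hR hRR]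
    exact (inner_self_eq_norm_sq (𝕜 := ℂ) (R (S x))).symm
  -- UPPER BOUND
  have hONn : 0 ≤ opNormA A (T * Ts + Ts * T) := aux_opNormA_nonneg A _
  have hupper : ∀ x : H, normA A x = 1 →
      (‖innerA A (T x) x‖) ^ 2 ≤ 2⁻¹ * opNormA A (T * Ts + Ts * T) := by
    intro x hx
    have hre2 : (innerA A (T x) x).re ^ 2 ≤ normA A (P x) ^ 2 := by
      have h1 : |(innerA A (T x) x).re| = ‖innerA A (P x) x‖ := by
        rw [hPz x, Complex.norm_real, Real.norm_eq_abs]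
      have h2 : ‖innerA A (P x) x‖ ≤ normA A (P x) := by
        have := aux_cs A R hR hRR (P x) x
        rw [hx, mul_one] at this; exact this
      calc (innerA A (T x) x).re ^ 2 = |(innerA A (T x) x).re| ^ 2 := (sq_abs _).symm
        _ ≤ normA A (P x) ^ 2 := by
            apply pow_le_pow_left₀ (abs_nonneg _) (h1 ▸ h2)
    have him2 : (innerA A (T x) x).im ^ 2 ≤ normA A (Q x) ^ 2 := by
      have h1 : |(innerA A (T x) x).im| = ‖innerA A (Q x) x‖ := by
        rw [hQz x, Complex.norm_real, Real.norm_eq_abs]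
      have h2 : ‖innerA A (Q x) x‖ ≤ normA A (Q x) := by
        have := aux_cs A R hR hRR (Q x) x
        rw [hx, mul_one] at this; exact this
      calc (innerA A (T x) x).im ^ 2 = |(innerA A (T x) x).im| ^ 2 := (sq_abs _).symm
        _ ≤ normA A (Q x) ^ 2 := by
            apply pow_le_pow_left₀ (abs_nonneg _) (h1 ▸ h2)
    have hsum : normA A (P x) ^ 2 + normA A (Q x) ^ 2
        = (innerA A (((P * P) + (Q * Q)) x) x).re := by
      rw [hsqid P hP x, hsqid Q hQ x]
      rw [show ((P * P) + (Q * Q)) x = (P * P) x + (Q * Q) x from rfl, aux_add1, Complex.add_re]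
    have hhalf : (innerA A (((P * P) + (Q * Q)) x) x).re
        = 2⁻¹ * (innerA A ((T * Ts + Ts * T) x) x).re := by
      rw [hPQ2]
      rw [show ((2:ℂ)⁻¹ • (T * Ts + Ts * T)) x = (2:ℂ)⁻¹ • ((T * Ts + Ts * T) x) from rfl]
      rw [aux_smul1]
      rw [show ((2:ℂ))⁻¹ = ((2⁻¹ : ℝ) : ℂ) by norm_num]
      rw [Complex.re_ofReal_mul]
    have hend : (innerA A ((T * Ts + Ts * T) x) x).re ≤ opNormA A (T * Ts + Ts * T) := by
      calc (innerA A ((T * Ts + Ts * T) x) x).re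
          ≤ ‖innerA A ((T * Ts + Ts * T) x) x‖ := Complex.re_le_norm _
        _ ≤ normA A ((T * Ts + Ts * T) x) * normA A x := aux_cs A R hR hRR _ _
        _ = normA A ((T * Ts + Ts * T) x) := by rw [hx, mul_one]
        _ ≤ opNormA A (T * Ts + Ts * T) := aux_le_opNormA A R hR hRR _ _ hS0 x hx
    have habs : (‖innerA A (T x) x‖) ^ 2
        = (innerA A (T x) x).re ^ 2 + (innerA A (T x) x).im ^ 2 := by
      rw [Complex.sq_norm, Complex.normSq_apply]; ring
    rw [habs]
    linarith
  have hup : (wA A T) ^ 2 ≤ (1/2) * opNormA A (T * Ts + Ts * T) := by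
    have hwle : wA A T ≤ Real.sqrt (2⁻¹ * opNormA A (T * Ts + Ts * T)) := by
      apply aux_wA_le A T _ (Real.sqrt_nonneg _)
      intro x hx
      rw [show ‖innerA A (T x) x‖
        = Real.sqrt ((‖innerA A (T x) x‖) ^ 2) from
          (Real.sqrt_sq (norm_nonneg _)).symm]
      exact Real.sqrt_le_sqrt (hupper x hx)
    have h := pow_le_pow_left₀ (aux_wA_nonneg A T) hwle 2
    rw [Real.sq_sqrt (by positivity)] at h
    linarith
  -- LOWER BOUND
  set w : ℝ := wA A T with hwdef
  have hw0 : 0 ≤ w := aux_wA_nonneg A T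
  have hwb : ∀ x : H, normA A x = 1 → ‖innerA A (T x) x‖ ≤ w :=
    fun x hx => aux_le_wA A R hR hRR T Ts hTs x hx
  set a : ℝ := opNormA A (P + Q) with hadef
  set b : ℝ := opNormA A (P - Q) with hbdef
  have han : 0 ≤ a := aux_opNormA_nonneg A _
  have hbn : 0 ≤ b := aux_opNormA_nonneg A _
  have hsqrt2 : (0:ℝ) ≤ Real.sqrt 2 := Real.sqrt_nonneg 2
  -- numerical radius bounds for P ± Q
  have hG1w : ∀ u : H, normA A u = 1 →
      ‖innerA A ((P + Q) u) u‖ ≤ Real.sqrt 2 * w := by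
    intro u hu
    set z := innerA A (T u) u with hz
    have h1 : innerA A ((P + Q) u) u = ((z.re + z.im : ℝ) : ℂ) := by
      rw [show (P + Q) u = P u + Q u from rfl, aux_add1, hPz u, hQz u]
      push_cast; ring
    rw [h1, Complex.norm_real, Real.norm_eq_abs]
    have h2 : (z.re + z.im) ^ 2 ≤ 2 * (‖z‖) ^ 2 := by
      have habs : (‖z‖) ^ 2 = z.re ^ 2 + z.im ^ 2 := by
        rw [Complex.sq_norm, Complex.normSq_apply]; ring
      nlinarith [sq_nonneg (z.re - z.im)]
    calc |z.re + z.im| = Real.sqrt ((z.re + z.im) ^ 2) := (Real.sqrt_sq_eq_abs _).symm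
      _ ≤ Real.sqrt (2 * (‖z‖) ^ 2) := Real.sqrt_le_sqrt h2
      _ = Real.sqrt 2 * ‖z‖ := by
          rw [Real.sqrt_mul (by norm_num) _, Real.sqrt_sq (norm_nonneg _)]
      _ ≤ Real.sqrt 2 * w := mul_le_mul_of_nonneg_left (hwb u hu) hsqrt2
  have hG2w : ∀ u : H, normA A u = 1 →
      ‖innerA A ((P - Q) u) u‖ ≤ Real.sqrt 2 * w := by
    intro u hu
    set z := innerA A (T u) u with hz
    have h1 : innerA A ((P - Q) u) u = ((z.re - z.im : ℝ) : ℂ) := by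
      rw [show (P - Q) u = P u - Q u from rfl, aux_sub1, hPz u, hQz u]
      push_cast; ring
    rw [h1, Complex.norm_real, Real.norm_eq_abs]
    have h2 : (z.re - z.im) ^ 2 ≤ 2 * (‖z‖) ^ 2 := by
      have habs : (‖z‖) ^ 2 = z.re ^ 2 + z.im ^ 2 := by
        rw [Complex.sq_norm, Complex.normSq_apply]; ring
      nlinarith [sq_nonneg (z.re + z.im)]
    calc |z.re - z.im| = Real.sqrt ((z.re - z.im) ^ 2) := (Real.sqrt_sq_eq_abs _).symm
      _ ≤ Real.sqrt (2 * (‖z‖) ^ 2) := Real.sqrt_le_sqrt h2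
      _ = Real.sqrt 2 * ‖z‖ := by
          rw [Real.sqrt_mul (by norm_num) _, Real.sqrt_sq (norm_nonneg _)]
      _ ≤ Real.sqrt 2 * w := mul_le_mul_of_nonneg_left (hwb u hu) hsqrt2
  have ha : a ≤ Real.sqrt 2 * w := by
    apply aux_opNormA_le A _ _ (by positivity)
    intro x hx
    exact aux_norm_le_w A R hR hRR (P + Q) hG1 (Real.sqrt 2 * w) (by positivity) hG1w x hx
  have hb : b ≤ Real.sqrt 2 * w := by
    apply aux_opNormA_le A _ _ (by positivity)
    intro x hx
    exact aux_norm_le_w A R hR hRR (P - Q) hG2 (Real.sqrt 2 * w) (by positivity) hG2w x hx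
  have ha2 : a ^ 2 ≤ 2 * w ^ 2 := by
    nlinarith [Real.sq_sqrt (show (0:ℝ) ≤ 2 by norm_num)]
  have hb2 : b ^ 2 ≤ 2 * w ^ 2 := by
    nlinarith [Real.sq_sqrt (show (0:ℝ) ≤ 2 by norm_num)]
  -- opNormA of P and Q
  have htri : ∀ u v : H, normA A (u + v) ≤ normA A u + normA A v := by
    intro u v
    rw [aux_norm A R hR hRR, aux_norm A R hR hRR, aux_norm A R hR hRR, map_add]
    exact norm_add_le _ _
  have hhalfnorm : ‖((2:ℂ))⁻¹‖ = 2⁻¹ := by norm_num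
  have hPa : opNormA A P ≤ (a + b) / 2 := by
    apply aux_opNormA_le A _ _ (by positivity)
    intro x hx
    have happ : P x = (2:ℂ)⁻¹ • ((P + Q) x + (P - Q) x) := by
      conv_lhs => rw [hPdec]
      rfl
    rw [happ, aux_norm_smul A R hR hRR, hhalfnorm]
    have h1 : normA A ((P + Q) x + (P - Q) x)
        ≤ normA A ((P + Q) x) + normA A ((P - Q) x) := htri _ _
    have h2 : normA A ((P + Q) x) ≤ a := aux_le_opNormA A R hR hRR _ _ hG1 x hx
    have h3 : normA A ((P - Q) x) ≤ b := aux_le_opNormA A R hR hRR _ _ hG2 x hx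
    have h4 := aux_normA_nonneg A ((P + Q) x + (P - Q) x)
    linarith
  have hQa : opNormA A Q ≤ (a + b) / 2 := by
    apply aux_opNormA_le A _ _ (by positivity)
    intro x hx
    have happ : Q x = (2:ℂ)⁻¹ • ((P + Q) x - (P - Q) x) := by
      conv_lhs => rw [hQdec]
      rfl
    rw [happ, aux_norm_smul A R hR hRR, hhalfnorm]
    have h1 : normA A ((P + Q) x - (P - Q) x)
        ≤ normA A ((P + Q) x) + normA A ((P - Q) x) := by
      rw [sub_eq_add_neg]
      calc normA A ((P + Q) x + -((P - Q) x))
          ≤ normA A ((P + Q) x) + normA A (-((P - Q) x)) := htri _ _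
        _ = normA A ((P + Q) x) + normA A ((P - Q) x) := by
            congr 1
            rw [aux_norm A R hR hRR, aux_norm A R hR hRR, map_neg, norm_neg]
    have h2 : normA A ((P + Q) x) ≤ a := aux_le_opNormA A R hR hRR _ _ hG1 x hx
    have h3 : normA A ((P - Q) x) ≤ b := aux_le_opNormA A R hR hRR _ _ hG2 x hx
    have h4 := aux_normA_nonneg A ((P + Q) x - (P - Q) x)
    linarith
  -- bound on opNormA (Ts T + T Ts)
  have hTarget : opNormA A (Ts * T + T * Ts) ≤ a ^ 2 + b ^ 2 := by
    apply aux_opNormA_le A _ _ (by positivity)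
    intro x hx
    have happ : (Ts * T + T * Ts) x = (P + Q) ((P + Q) x) + (P - Q) ((P - Q) x) := by
      rw [hIdent]; rfl
    rw [happ]
    have h1 := htri ((P + Q) ((P + Q) x)) ((P - Q) ((P - Q) x))
    have h2 : normA A ((P + Q) ((P + Q) x)) ≤ a * normA A ((P + Q) x) :=
      aux_seminorm A R hR hRR _ _ hG1 _
    have h3 : normA A ((P - Q) ((P - Q) x)) ≤ b * normA A ((P - Q) x) :=
      aux_seminorm A R hR hRR _ _ hG2 _
    have h4 : normA A ((P + Q) x) ≤ a := aux_le_opNormA A R hR hRR _ _ hG1 x hx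
    have h5 : normA A ((P - Q) x) ≤ b := aux_le_opNormA A R hR hRR _ _ hG2 x hx
    have h6 : a * normA A ((P + Q) x) ≤ a * a := mul_le_mul_of_nonneg_left h4 han
    have h7 : b * normA A ((P - Q) x) ≤ b * b := mul_le_mul_of_nonneg_left h5 hbn
    nlinarith
  -- final arithmetic
  have hmax : max (opNormA A P) (opNormA A Q) ≤ (a + b) / 2 := max_le hPa hQa
  have hα0 : 0 ≤ α := hα ▸ abs_nonneg _
  have hmax0 : 0 ≤ max (opNormA A P) (opNormA A Q) :=
    le_trans (aux_opNormA_nonneg A P) (le_max_left _ _)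
  constructor
  · calc (1/4) * opNormA A (Ts * T + T * Ts) + (α/2) * max (opNormA A P) (opNormA A Q)
        ≤ (1/4) * (a ^ 2 + b ^ 2) + (α/2) * ((a + b) / 2) := by
          apply add_le_add
          · linarith
          · exact mul_le_mul_of_nonneg_left hmax (by linarith)
      _ ≤ w ^ 2 := by
          rcases le_total a b with hab | hab
          · have hαv : α = b - a := by rw [hα, abs_of_nonpos (by linarith)]; ring
            rw [hαv]; nlinarith
          · have hαv : α = a - b := by rw [hα, abs_of_nonneg (by linarith)]
            rw [hαv]; nlinarith
  · exact hup
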